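/- Let m ≥ 1 be a natural number, let ν > 0, c > 0, and let a be a real number with 1 − m/2 < a < ν/2 + 1. Then ∫_0^∞ t^{-(m/2 + a)} (ν + c/t)^{-(ν+m)/2} dt = ν^{a − 1 − ν/2} c^{-(m/2 + a − 1)} · Γ(m/2 + a − 1) Γ(ν/2 − a + 1) / Γ((ν+m)/2). -/

import Mathlib

open MeasureTheory Real

/-- Real Beta integral over `Ioo 0 1`. -/
lemma realBeta {p q : ℝ} (hp : 0 < p) (hq : 0 < q) :
    ∫ x in Set.Ioo (0 : ℝ) 1, x ^ (p - 1) * (1 - x) ^ (q - 1) =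
      Real.Gamma p * Real.Gamma q / Real.Gamma (p + q) := by
  have h := Complex.Gamma_mul_Gamma_eq_betaIntegral (s := (p : ℂ)) (t := (q : ℂ))
    (by simpa using hp) (by simpa using hq)
  have hbeta : Complex.betaIntegral (p : ℂ) (q : ℂ) =
      ((∫ x in Set.Ioo (0 : ℝ) 1, x ^ (p - 1) * (1 - x) ^ (q - 1) : ℝ) : ℂ) := by
    rw [show (∫ x in Set.Ioo (0 : ℝ) 1, x ^ (p - 1) * (1 - x) ^ (q - 1)) =
        ∫ x in (0:ℝ)..1, x ^ (p - 1) * (1 - x) ^ (q - 1) from by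
      rw [intervalIntegral.integral_of_le (by norm_num : (0:ℝ) ≤ 1),
        MeasureTheory.integral_Ioc_eq_integral_Ioo]]
    rw [Complex.betaIntegral, ← intervalIntegral.integral_ofReal]
    refine intervalIntegral.integral_congr fun x hx => ?_
    rw [Set.uIcc_of_le (by norm_num : (0:ℝ) ≤ 1)] at hx
    push_cast
    rw [Complex.ofReal_cpow hx.1 (p - 1), Complex.ofReal_cpow (by linarith [hx.2] : 0 ≤ 1 - x)
      (q - 1)]
    push_cast
    ring
  rw [hbeta, ← Complex.ofReal_add, Complex.Gamma_ofReal, Complex.Gamma_ofReal,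
    Complex.Gamma_ofReal, ← Complex.ofReal_mul, ← Complex.ofReal_mul] at h
  have h' := Complex.ofReal_injective h
  have hG : Real.Gamma (p + q) ≠ 0 := (Real.Gamma_pos_of_pos (by linarith)).ne'
  field_simp
  linarith [h']

/-- Integration over the scale parameter σ² of the integrated Student-t likelihood
against the prior t^{-a}, under the propriety condition of Proposition 1. -/
theorem stmt5 (m : ℕ) (hm : 1 ≤ m) (ν c a : ℝ) (hν : 0 < ν) (hc : 0 < c)
    (ha1 : 1 - (m : ℝ) / 2 < a) (ha2 : a < ν / 2 + 1) :
    ∫ t in Set.Ioi (0 : ℝ), t ^ (-((m : ℝ) / 2 + a)) * (ν + c / t) ^ (-(ν + m) / 2) =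
      ν ^ (a - 1 - ν / 2) * c ^ (-((m : ℝ) / 2 + a - 1)) *
        (Real.Gamma ((m : ℝ) / 2 + a - 1) * Real.Gamma (ν / 2 - a + 1) /
          Real.Gamma ((ν + m) / 2)) := by
  set s : ℝ := (m : ℝ) / 2 + a with hs
  set r : ℝ := (ν + m) / 2 with hr
  set k : ℝ := c / ν with hk
  have hk0 : 0 < k := div_pos hc hν
  set f : ℝ → ℝ := fun x => k / x - k with hf
  have himg : f '' Set.Ioo 0 1 = Set.Ioi (0 : ℝ) := by
    ext y
    constructor
    · rintro ⟨x, ⟨hx0, hx1⟩, rfl⟩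
      have : 0 < k / x - k := by
        rw [sub_pos]
        exact (lt_div_iff₀ hx0).mpr (by nlinarith)
      simpa [hf] using this
    · intro hy
      have hy0 : 0 < y := hy
      refine ⟨k / (k + y), ⟨div_pos hk0 (by linarith), (div_lt_one (by linarith)).mpr
        (by linarith)⟩, ?_⟩
      have hky : k + y ≠ 0 := by positivity
      simp only [hf]
      field_simp
      ring
  have hinj : Set.InjOn f (Set.Ioo 0 1) := by
    rintro x ⟨hx0, _⟩ y ⟨hy0, _⟩ hxy
    simp only [hf, sub_left_inj] at hxy
    rw [div_eq_div_iff hx0.ne' hy0.ne'] at hxy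
    exact (mul_left_cancel₀ hk0.ne' hxy).symm
  have hderiv : ∀ x ∈ Set.Ioo (0:ℝ) 1, HasDerivWithinAt f (-(k / x ^ 2)) (Set.Ioo 0 1) x := by
    intro x hx
    have hx0 : x ≠ 0 := hx.1.ne'
    have : HasDerivAt f (k * (-(x ^ 2)⁻¹)) x := by
      simpa [hf, div_eq_mul_inv] using ((hasDerivAt_inv hx0).const_mul k).sub_const k
    refine this.hasDerivWithinAt.congr_deriv ?_
    field_simp
  have key := MeasureTheory.integral_image_eq_integral_abs_deriv_smul measurableSet_Ioo hderiv
    hinj (fun t => t ^ (-s) * (ν + c / t) ^ (-r))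
  rw [himg] at key
  have hr' : -(ν + (m:ℝ)) / 2 = -r := by rw [hr]; ring
  rw [hr', key]
  have congr1 : ∀ x ∈ Set.Ioo (0:ℝ) 1,
      |(-(k / x ^ 2))| • (f x ^ (-s) * (ν + c / f x) ^ (-r)) =
      (c ^ (1 - s) * ν ^ (s - 1 - r)) * (x ^ (s - 2) * (1 - x) ^ (r - s)) := by
    intro x ⟨hx0, hx1⟩
    have h1x : 0 < 1 - x := by linarith
    have hfx : f x = k * (1 - x) / x := by rw [hf]; field_simp
    have hfx0 : 0 < f x := by rw [hfx]; positivity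
    have hcfx : ν + c / f x = ν / (1 - x) := by
      rw [hfx, hk]
      field_simp
      ring
    have habs : |(-(k / x ^ 2))| = k / x ^ 2 := by
      rw [abs_neg, abs_of_pos (by positivity)]
    rw [habs, smul_eq_mul, hcfx, hfx, hk]
    rw [Real.div_rpow (by positivity) hx0.le, Real.div_rpow hν.le h1x.le,
      Real.mul_rpow (by positivity) h1x.le, Real.div_rpow hc.le hν.le]
    simp only [Real.rpow_neg hx0.le, Real.rpow_neg h1x.le, Real.rpow_neg hν.le,
      Real.rpow_neg hc.le]
    have e1 : x ^ (s - 2) = (x ^ s) / x ^ 2 := by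
      rw [Real.rpow_sub hx0, Real.rpow_two]
    have e2 : (1 - x) ^ (r - s) = (1 - x) ^ r / (1 - x) ^ s := by
      rw [Real.rpow_sub h1x]
    have e3 : c ^ (1 - s) = c / c ^ s := by
      rw [Real.rpow_sub hc, Real.rpow_one]
    have e4 : ν ^ (s - 1 - r) = ν ^ s / ν / ν ^ r := by
      rw [Real.rpow_sub hν, Real.rpow_sub hν, Real.rpow_one]
    rw [e1, e2, e3, e4]
    have hxs : (0:ℝ) < x ^ s := Real.rpow_pos_of_pos hx0 s
    have h1xs : (0:ℝ) < (1 - x) ^ s := Real.rpow_pos_of_pos h1x s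
    have h1xr : (0:ℝ) < (1 - x) ^ r := Real.rpow_pos_of_pos h1x r
    have hcs : (0:ℝ) < c ^ s := Real.rpow_pos_of_pos hc s
    have hns : (0:ℝ) < ν ^ s := Real.rpow_pos_of_pos hν s
    have hnr : (0:ℝ) < ν ^ r := Real.rpow_pos_of_pos hν r
    field_simp
  rw [MeasureTheory.setIntegral_congr_fun measurableSet_Ioo congr1,
    MeasureTheory.integral_const_mul]
  have hbeta := realBeta (p := s - 1) (q := r - s + 1)
    (by rw [hs]; linarith) (by rw [hs, hr]; linarith)
  have harg1 : s - 1 - 1 = s - 2 := by ring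
  have harg2 : r - s + 1 - 1 = r - s := by ring
  rw [harg1, harg2] at hbeta
  rw [hbeta]
  have E5 : Real.Gamma (s - 1 + (r - s + 1)) = Real.Gamma ((ν + m) / 2) := by
    rw [hs, hr]; congr 1; ring
  have E4 : Real.Gamma (r - s + 1) = Real.Gamma (ν / 2 - a + 1) := by
    rw [hs, hr]; congr 1; ring
  have E3 : Real.Gamma (s - 1) = Real.Gamma ((m : ℝ) / 2 + a - 1) := by rw [hs]
  have E2 : ν ^ (s - 1 - r) = ν ^ (a - 1 - ν / 2) := by rw [hs, hr]; congr 1; ring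
  have E1 : c ^ (1 - s) = c ^ (-((m : ℝ) / 2 + a - 1)) := by rw [hs]; congr 1; ring
  rw [E5, E4, E3, E2, E1]
  ring
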